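/- Let G be a simple undirected graph on {1,…,n} with k ≥ 1 edges and maximum degree d, and let a Bernoulli(p) test include each node independently with probability p ∈ (0,1). Then kp⁴/(p² + 2dp³ + kp⁴) ≤ P_G[Y=1] ≤ kp². -/

import Mathlib

open scoped BigOperators Classical
open Finset Filter

noncomputable section

/-- The set of all potential edges: unordered pairs of distinct nodes of `Fin n`. -/
def allPairs (n : ℕ) : Finset (Sym2 (Fin n)) :=
  Finset.univ.filter fun e => ¬ e.IsDiag

/-- Both endpoints of the pair `e` lie in the test `L`. -/
def pairIn {n : ℕ} (e : Sym2 (Fin n)) (L : Finset (Fin n)) : Prop :=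
  ∀ v ∈ e, v ∈ L

/-- The test `L` covers some edge of the edge set `E` (positive outcome `Y = 1`). -/
def covers {n : ℕ} (E : Finset (Sym2 (Fin n))) (L : Finset (Fin n)) : Prop :=
  ∃ e ∈ E, pairIn e L

/-- ER(n,q) probability weight of a given edge set `E`. -/
def erWeight (n : ℕ) (q : ℝ) (E : Finset (Sym2 (Fin n))) : ℝ :=
  q ^ E.card * (1 - q) ^ ((allPairs n).card - E.card)

/-- Probability of an event under the Erdős–Rényi random graph ER(n,q). -/
def erProb (n : ℕ) (q : ℝ) (A : Finset (Sym2 (Fin n)) → Prop) : ℝ :=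
  ∑ E ∈ (allPairs n).powerset, if A E then erWeight n q E else 0

/-- Bernoulli(p) probability weight of a single test `L ⊆ {1,…,n}`. -/
def testWeight (n : ℕ) (p : ℝ) (L : Finset (Fin n)) : ℝ :=
  p ^ L.card * (1 - p) ^ (n - L.card)

/-- Probability of an event for a single Bernoulli(p) test. -/
def bernProb (n : ℕ) (p : ℝ) (A : Finset (Fin n) → Prop) : ℝ :=
  ∑ L : Finset (Fin n), if A L then testWeight n p L else 0

/-- Probability weight of `t` i.i.d. Bernoulli(p) tests. -/
def testsWeight (n t : ℕ) (p : ℝ) (Ls : Fin t → Finset (Fin n)) : ℝ :=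
  ∏ i, testWeight n p (Ls i)

/-- Probability of an event for `t` i.i.d. Bernoulli(p) tests. -/
def bernTestsProb (n t : ℕ) (p : ℝ) (A : (Fin t → Finset (Fin n)) → Prop) : ℝ :=
  ∑ Ls : Fin t → Finset (Fin n), if A Ls then testsWeight n t p Ls else 0

/-- Joint probability over an ER(n,q) graph and `t` i.i.d. Bernoulli(p) tests. -/
def erTestsProb (n t : ℕ) (q p : ℝ)
    (A : Finset (Sym2 (Fin n)) → (Fin t → Finset (Fin n)) → Prop) : ℝ :=
  ∑ E ∈ (allPairs n).powerset, ∑ Ls : Fin t → Finset (Fin n),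
    if A E Ls then erWeight n q E * testsWeight n t p Ls else 0

/-- Degree of node `v` in the edge set `E`. -/
def degOf {n : ℕ} (E : Finset (Sym2 (Fin n))) (v : Fin n) : ℕ :=
  (E.filter fun e => v ∈ e).card

/-- Maximum degree of the edge set `E`. -/
def maxDeg {n : ℕ} (E : Finset (Sym2 (Fin n))) : ℕ :=
  Finset.univ.sup (degOf E)

/-- Average number of edges of ER(n, q n): `k̄ = q·C(n,2)`. -/
def kbar (q : ℕ → ℝ) (n : ℕ) : ℝ := q n * (n.choose 2 : ℝ)

/-- Two pairs are vertex-disjoint. -/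
def sym2Disjoint {n : ℕ} (e e' : Sym2 (Fin n)) : Prop := ∀ v, v ∈ e → v ∉ e'

def vset {n : ℕ} (e : Sym2 (Fin n)) : Finset (Fin n) :=
  Sym2.lift ⟨fun a b => {a, b}, fun a b => Finset.pair_comm a b⟩ e

lemma mem_vset {n : ℕ} {e : Sym2 (Fin n)} {v : Fin n} : v ∈ vset e ↔ v ∈ e := by
  induction e using Sym2.ind with
  | _ a b => simp [vset, Sym2.mem_iff]

lemma vset_card {n : ℕ} {e : Sym2 (Fin n)} (he : ¬ e.IsDiag) : (vset e).card = 2 := by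
  induction e using Sym2.ind with
  | _ a b =>
    have hab : a ≠ b := by simpa [Sym2.mk_isDiag_iff] using he
    simp [vset, Finset.card_pair hab]

lemma vset_inj {n : ℕ} {e e' : Sym2 (Fin n)} (he : ¬ e.IsDiag) (he' : ¬ e'.IsDiag)
    (h : vset e = vset e') : e = e' := by
  induction e using Sym2.ind with
  | _ a b =>
  induction e' using Sym2.ind with
  | _ c d =>
    have hab : a ≠ b := by simpa [Sym2.mk_isDiag_iff] using he
    have hcd : c ≠ d := by simpa [Sym2.mk_isDiag_iff] using he'
    have h1 : a = c ∨ a = d := by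
      have : a ∈ vset s(c, d) := h ▸ (by simp [vset])
      simpa [vset] using this
    have h2 : b = c ∨ b = d := by
      have : b ∈ vset s(c, d) := h ▸ (by simp [vset])
      simpa [vset] using this
    rw [Sym2.eq_iff]
    rcases h1 with rfl | rfl <;> rcases h2 with rfl | rfl <;> tauto

lemma count_shares {n : ℕ} (E : Finset (Sym2 (Fin n))) (e : Sym2 (Fin n)) :
    ((E.erase e).filter fun e' => ¬ Disjoint (vset e) (vset e')).card ≤ 2 * maxDeg E := by
  induction e using Sym2.ind with
  | _ a b =>
  have hsub : ((E.erase s(a,b)).filter fun e' => ¬ Disjoint (vset s(a,b)) (vset e'))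
      ⊆ (E.filter fun e' => a ∈ e') ∪ (E.filter fun e' => b ∈ e') := by
    intro e' h'
    simp only [Finset.mem_filter, Finset.mem_erase] at h'
    obtain ⟨⟨hne, hE⟩, hnd⟩ := h'
    rw [Finset.not_disjoint_iff] at hnd
    obtain ⟨v, hv1, hv2⟩ := hnd
    have hv1' : v = a ∨ v = b := by simpa [vset] using hv1
    have hv2' : v ∈ e' := mem_vset.mp hv2
    rcases hv1' with rfl | rfl
    · exact Finset.mem_union_left _ (by simp only [Finset.mem_filter]; exact ⟨hE, hv2'⟩)
    · exact Finset.mem_union_right _ (by simp only [Finset.mem_filter]; exact ⟨hE, hv2'⟩)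
  calc ((E.erase s(a,b)).filter fun e' => ¬ Disjoint (vset s(a,b)) (vset e')).card
      ≤ ((E.filter fun e' => a ∈ e') ∪ (E.filter fun e' => b ∈ e')).card :=
        Finset.card_le_card hsub
    _ ≤ (E.filter fun e' => a ∈ e').card + (E.filter fun e' => b ∈ e').card :=
        Finset.card_union_le _ _
    _ ≤ maxDeg E + maxDeg E := by
        have ha : degOf E a ≤ maxDeg E := Finset.le_sup (Finset.mem_univ a)
        have hb : degOf E b ≤ maxDeg E := Finset.le_sup (Finset.mem_univ b)
        have hda : (E.filter fun e' => a ∈ e').card = degOf E a := by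
          rw [degOf]
        have hdb : (E.filter fun e' => b ∈ e').card = degOf E b := by
          rw [degOf]
        omega
    _ = 2 * maxDeg E := by ring

lemma inner_bound {n : ℕ} {p : ℝ} (hp0 : 0 < p) (hp1 : p ≤ 1)
    (E : Finset (Sym2 (Fin n))) (hsimple : ∀ e ∈ E, ¬ e.IsDiag)
    {e : Sym2 (Fin n)} (he : e ∈ E) :
    ∑ e' ∈ E, p ^ ((vset e ∪ vset e').card)
      ≤ p ^ 2 + 2 * (maxDeg E) * p ^ 3 + E.card * p ^ 4 := by
  rw [← Finset.add_sum_erase _ _ he]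
  have h0 : p ^ ((vset e ∪ vset e).card) = p ^ 2 := by
    rw [Finset.union_self, vset_card (hsimple e he)]
  rw [h0]
  have hsplit := Finset.sum_filter_add_sum_filter_not (E.erase e)
    (fun e' => ¬ Disjoint (vset e) (vset e')) (fun e' => p ^ ((vset e ∪ vset e').card))
  rw [← hsplit]
  have hS : ∑ e' ∈ (E.erase e).filter (fun e' => ¬ Disjoint (vset e) (vset e')),
      p ^ ((vset e ∪ vset e').card) ≤ 2 * (maxDeg E) * p ^ 3 := by
    have hterm : ∀ e' ∈ (E.erase e).filter (fun e' => ¬ Disjoint (vset e) (vset e')),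
        p ^ ((vset e ∪ vset e').card) ≤ p ^ 3 := by
      intro e' h'
      simp only [Finset.mem_filter, Finset.mem_erase] at h'
      obtain ⟨⟨hne, hE'⟩, _⟩ := h'
      have hc3 : 3 ≤ (vset e ∪ vset e').card := by
        by_contra hc
        push_neg at hc
        have hsub1 : vset e ⊆ vset e ∪ vset e' := Finset.subset_union_left
        have hsub2 : vset e' ⊆ vset e ∪ vset e' := Finset.subset_union_right
        have hce : (vset e).card = 2 := vset_card (hsimple e he)
        have hce' : (vset e').card = 2 := vset_card (hsimple e' hE')
        have h1 : vset e = vset e ∪ vset e' :=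
          Finset.eq_of_subset_of_card_le hsub1 (by omega)
        have h2 : vset e' = vset e ∪ vset e' :=
          Finset.eq_of_subset_of_card_le hsub2 (by omega)
        exact hne (vset_inj (hsimple e' hE') (hsimple e he) (h2.trans h1.symm))
      exact pow_le_pow_of_le_one hp0.le hp1 hc3
    calc ∑ e' ∈ (E.erase e).filter (fun e' => ¬ Disjoint (vset e) (vset e')),
        p ^ ((vset e ∪ vset e').card)
        ≤ ∑ _e' ∈ (E.erase e).filter (fun e' => ¬ Disjoint (vset e) (vset e')), p ^ 3 :=
          Finset.sum_le_sum hterm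
      _ = ((E.erase e).filter (fun e' => ¬ Disjoint (vset e) (vset e'))).card * p ^ 3 := by
          rw [Finset.sum_const, nsmul_eq_mul]
      _ ≤ 2 * (maxDeg E) * p ^ 3 := by
          have := count_shares E e
          have hp3 : (0:ℝ) ≤ p ^ 3 := by positivity
          have : (((E.erase e).filter fun e' => ¬ Disjoint (vset e) (vset e')).card : ℝ)
              ≤ 2 * (maxDeg E) := by exact_mod_cast this
          nlinarith
  have hD : ∑ e' ∈ (E.erase e).filter (fun e' => ¬¬ Disjoint (vset e) (vset e')),
      p ^ ((vset e ∪ vset e').card) ≤ E.card * p ^ 4 := by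
    have hterm : ∀ e' ∈ (E.erase e).filter (fun e' => ¬¬ Disjoint (vset e) (vset e')),
        p ^ ((vset e ∪ vset e').card) = p ^ 4 := by
      intro e' h'
      simp only [Finset.mem_filter, Finset.mem_erase, not_not] at h'
      obtain ⟨⟨hne, hE'⟩, hdisj⟩ := h'
      rw [Finset.card_union_of_disjoint hdisj, vset_card (hsimple e he),
        vset_card (hsimple e' hE')]
    rw [Finset.sum_congr rfl hterm, Finset.sum_const, nsmul_eq_mul]
    have hcard : (((E.erase e).filter fun e' => ¬¬ Disjoint (vset e) (vset e')).card : ℝ)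
        ≤ E.card := by
      exact_mod_cast Finset.card_le_card
        ((Finset.filter_subset _ _).trans (Finset.erase_subset _ _))
    have hp4 : (0:ℝ) ≤ p ^ 4 := by positivity
    nlinarith
  linarith

lemma sum_superset_weight {n : ℕ} {p : ℝ} (S : Finset (Fin n)) :
    ∑ L : Finset (Fin n), (if S ⊆ L then testWeight n p L else 0) = p ^ S.card := by
  have h := Finset.prod_add (fun _ : Fin n => p)
    (fun v => if v ∈ S then (0:ℝ) else 1 - p) Finset.univ
  have hL : ∀ L : Finset (Fin n),
      (∏ _v ∈ L, p) * ∏ v ∈ Finset.univ \ L, (if v ∈ S then (0:ℝ) else 1 - p)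
      = if S ⊆ L then testWeight n p L else 0 := by
    intro L
    by_cases hSL : S ⊆ L
    · have : ∀ v ∈ Finset.univ \ L, (if v ∈ S then (0:ℝ) else 1 - p) = 1 - p := by
        intro v hv
        have : v ∉ S := fun hvS => (Finset.mem_sdiff.mp hv).2 (hSL hvS)
        simp [this]
      rw [Finset.prod_congr rfl this]
      simp [hSL, testWeight, Finset.prod_const, Finset.card_univ_diff L]
    · obtain ⟨v, hvS, hvL⟩ := Finset.not_subset.mp hSL
      have hmem : v ∈ Finset.univ \ L := Finset.mem_sdiff.mpr ⟨Finset.mem_univ v, hvL⟩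
      have hzero : (if v ∈ S then (0:ℝ) else 1 - p) = 0 := by simp [hvS]
      rw [Finset.prod_eq_zero hmem hzero]
      simp [hSL]
  rw [Finset.powerset_univ] at h
  calc ∑ L : Finset (Fin n), (if S ⊆ L then testWeight n p L else 0)
      = ∑ L : Finset (Fin n),
        (∏ _v ∈ L, p) * ∏ v ∈ Finset.univ \ L, (if v ∈ S then (0:ℝ) else 1 - p) := by
        exact Finset.sum_congr rfl fun L _ => (hL L).symm
    _ = ∏ v : Fin n, (p + if v ∈ S then (0:ℝ) else 1 - p) := h.symm
    _ = ∏ v : Fin n, (if v ∈ S then p else 1) := by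
        refine Finset.prod_congr rfl fun v _ => ?_
        by_cases hv : v ∈ S <;> simp [hv]
    _ = p ^ S.card := by
        rw [Finset.prod_ite_mem, Finset.univ_inter, Finset.prod_const]


def Xc {n : ℕ} (E : Finset (Sym2 (Fin n))) (L : Finset (Fin n)) : ℝ :=
  ∑ e ∈ E, if vset e ⊆ L then (1:ℝ) else 0

lemma pairIn_iff {n : ℕ} {e : Sym2 (Fin n)} {L : Finset (Fin n)} :
    pairIn e L ↔ vset e ⊆ L := by
  constructor
  · intro h v hv; exact h v (mem_vset.mp hv)
  · intro h v hv; exact h (mem_vset.mpr hv)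

lemma Xc_nonneg {n : ℕ} (E : Finset (Sym2 (Fin n))) (L : Finset (Fin n)) : 0 ≤ Xc E L :=
  Finset.sum_nonneg fun e _ => by positivity

lemma Xc_eq_zero {n : ℕ} {E : Finset (Sym2 (Fin n))} {L : Finset (Fin n)}
    (h : ¬ covers E L) : Xc E L = 0 := by
  apply Finset.sum_eq_zero
  intro e he
  have : ¬ vset e ⊆ L := fun hsub => h ⟨e, he, pairIn_iff.mpr hsub⟩
  simp [this]

lemma one_le_Xc {n : ℕ} {E : Finset (Sym2 (Fin n))} {L : Finset (Fin n)}
    (h : covers E L) : 1 ≤ Xc E L := by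
  obtain ⟨e, he, hp⟩ := h
  have := pairIn_iff.mp hp
  calc (1:ℝ) = if vset e ⊆ L then (1:ℝ) else 0 := by simp [this]
    _ ≤ Xc E L := Finset.single_le_sum (f := fun e => if vset e ⊆ L then (1:ℝ) else 0)
        (fun e _ => by split <;> norm_num) he

lemma testWeight_nonneg {n : ℕ} {p : ℝ} (hp0 : 0 ≤ p) (hp1 : p ≤ 1) (L : Finset (Fin n)) :
    0 ≤ testWeight n p L := by
  exact mul_nonneg (pow_nonneg hp0 _) (pow_nonneg (by linarith) _)

lemma ex_eq {n : ℕ} {p : ℝ} (E : Finset (Sym2 (Fin n))) (hsimple : ∀ e ∈ E, ¬ e.IsDiag) :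
    ∑ L : Finset (Fin n), testWeight n p L * Xc E L = E.card * p ^ 2 := by
  have : ∀ L : Finset (Fin n), testWeight n p L * Xc E L
      = ∑ e ∈ E, (if vset e ⊆ L then testWeight n p L else 0) := by
    intro L
    rw [Xc, Finset.mul_sum]
    exact Finset.sum_congr rfl fun e _ => by rw [mul_ite, mul_one, mul_zero]
  rw [Finset.sum_congr rfl fun L _ => this L, Finset.sum_comm]
  rw [Finset.sum_congr rfl fun e he => sum_superset_weight (vset e)]
  rw [Finset.sum_congr rfl fun e he => by rw [vset_card (hsimple e he)]]
  rw [Finset.sum_const, nsmul_eq_mul]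

lemma ex2_eq {n : ℕ} {p : ℝ} (E : Finset (Sym2 (Fin n))) :
    ∑ L : Finset (Fin n), testWeight n p L * (Xc E L) ^ 2
      = ∑ e ∈ E, ∑ e' ∈ E, p ^ ((vset e ∪ vset e').card) := by
  have key : ∀ L : Finset (Fin n), testWeight n p L * (Xc E L) ^ 2
      = ∑ e ∈ E, ∑ e' ∈ E, (if vset e ∪ vset e' ⊆ L then testWeight n p L else 0) := by
    intro L
    rw [sq, Xc, Finset.sum_mul_sum, Finset.mul_sum]
    refine Finset.sum_congr rfl fun e _ => ?_
    rw [Finset.mul_sum]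
    refine Finset.sum_congr rfl fun e' _ => ?_
    by_cases h1 : vset e ⊆ L <;> by_cases h2 : vset e' ⊆ L <;>
      simp [h1, h2, Finset.union_subset_iff]
  rw [Finset.sum_congr rfl fun L _ => key L, Finset.sum_comm]
  refine Finset.sum_congr rfl fun e _ => ?_
  rw [Finset.sum_comm]
  exact Finset.sum_congr rfl fun e' _ => sum_superset_weight _


/-- bounds on the probability of a positive test.
Let `G` be a simple undirected graph on `{1,…,n}` with `k ≥ 1` edges and maximum degree `d`,
and let a Bernoulli(p) test include each node independently with probability `p ∈ (0,1)`.
Then `kp⁴/(p² + 2dp³ + kp⁴) ≤ P_G[Y=1] ≤ kp²`. -/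
theorem statement8 (n k d : ℕ) (p : ℝ) (hp0 : 0 < p) (hp1 : p < 1)
    (E : Finset (Sym2 (Fin n))) (hsimple : ∀ e ∈ E, ¬ e.IsDiag)
    (hk : E.card = k) (hk1 : 1 ≤ k) (hmax : maxDeg E = d) :
    (k : ℝ) * p ^ 4 / (p ^ 2 + 2 * d * p ^ 3 + k * p ^ 4) ≤ bernProb n p (covers E) ∧
    bernProb n p (covers E) ≤ (k : ℝ) * p ^ 2 := by
  set w := testWeight n p with hw
  have hwnn : ∀ L : Finset (Fin n), 0 ≤ w L := testWeight_nonneg hp0.le hp1.le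
  have hEX : ∑ L : Finset (Fin n), w L * Xc E L = (k:ℝ) * p ^ 2 := by
    rw [ex_eq E hsimple, hk]
  -- upper bound
  have hupper : bernProb n p (covers E) ≤ (k : ℝ) * p ^ 2 := by
    rw [← hEX, bernProb]
    refine Finset.sum_le_sum fun L _ => ?_
    by_cases hc : covers E L
    · simp only [hc, if_true]
      exact le_mul_of_one_le_right (hwnn L) (one_le_Xc hc)
    · simp only [hc, if_false]
      exact mul_nonneg (hwnn L) (Xc_nonneg E L)
  -- second moment bound
  have hEX2 : ∑ L : Finset (Fin n), w L * (Xc E L) ^ 2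
      ≤ (k:ℝ) * (p ^ 2 + 2 * d * p ^ 3 + k * p ^ 4) := by
    rw [ex2_eq E]
    calc ∑ e ∈ E, ∑ e' ∈ E, p ^ ((vset e ∪ vset e').card)
        ≤ ∑ e ∈ E, (p ^ 2 + 2 * d * p ^ 3 + k * p ^ 4) := by
          refine Finset.sum_le_sum fun e he => ?_
          have := inner_bound hp0 hp1.le E hsimple he
          rwa [hmax, hk] at this
      _ = (k:ℝ) * (p ^ 2 + 2 * d * p ^ 3 + k * p ^ 4) := by
          rw [Finset.sum_const, nsmul_eq_mul, hk]
  -- Cauchy-Schwarz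
  set s := Finset.univ.filter (fun L : Finset (Fin n) => covers E L) with hs
  have hP : bernProb n p (covers E) = ∑ L ∈ s, w L := by
    rw [bernProb, hs, Finset.sum_filter]
  have hCS := Finset.sum_mul_sq_le_sq_mul_sq s
    (fun L => Real.sqrt (w L)) (fun L => Real.sqrt (w L) * Xc E L)
  have h1 : ∀ L ∈ s, Real.sqrt (w L) * (Real.sqrt (w L) * Xc E L) = w L * Xc E L := by
    intro L _
    rw [← mul_assoc, Real.mul_self_sqrt (hwnn L)]
  have h2 : ∀ L ∈ s, (Real.sqrt (w L)) ^ 2 = w L := fun L _ => Real.sq_sqrt (hwnn L)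
  have h3 : ∀ L ∈ s, (Real.sqrt (w L) * Xc E L) ^ 2 = w L * (Xc E L) ^ 2 := by
    intro L _
    rw [mul_pow, Real.sq_sqrt (hwnn L)]
  rw [Finset.sum_congr rfl h1, Finset.sum_congr rfl h2, Finset.sum_congr rfl h3] at hCS
  have hsum1 : ∑ L ∈ s, w L * Xc E L = ∑ L : Finset (Fin n), w L * Xc E L := by
    rw [← Finset.sum_filter_add_sum_filter_not Finset.univ
      (fun L : Finset (Fin n) => covers E L) (fun L => w L * Xc E L)]
    have : ∑ L ∈ Finset.univ.filter (fun L : Finset (Fin n) => ¬ covers E L),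
        w L * Xc E L = 0 := by
      refine Finset.sum_eq_zero fun L hL => ?_
      rw [Xc_eq_zero (Finset.mem_filter.mp hL).2, mul_zero]
    rw [this, add_zero]
  have hsum2 : ∑ L ∈ s, w L * (Xc E L) ^ 2 ≤ ∑ L : Finset (Fin n), w L * (Xc E L) ^ 2 :=
    Finset.sum_le_sum_of_subset_of_nonneg (Finset.filter_subset _ _)
      (fun L _ _ => mul_nonneg (hwnn L) (sq_nonneg _))
  rw [hsum1, hEX] at hCS
  have hB : (0:ℝ) < p ^ 2 + 2 * d * p ^ 3 + k * p ^ 4 := by positivity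
  have hchain : ((k:ℝ) * p ^ 2) ^ 2
      ≤ bernProb n p (covers E) * ((k:ℝ) * (p ^ 2 + 2 * d * p ^ 3 + k * p ^ 4)) := by
    calc ((k:ℝ) * p ^ 2) ^ 2 ≤ (∑ L ∈ s, w L) * ∑ L ∈ s, w L * (Xc E L) ^ 2 := hCS
      _ ≤ (∑ L ∈ s, w L) * ((k:ℝ) * (p ^ 2 + 2 * d * p ^ 3 + k * p ^ 4)) := by
          refine mul_le_mul_of_nonneg_left (hsum2.trans hEX2) ?_
          exact Finset.sum_nonneg fun L _ => hwnn L
      _ = bernProb n p (covers E) * ((k:ℝ) * (p ^ 2 + 2 * d * p ^ 3 + k * p ^ 4)) := by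
          rw [hP]
  have hkpos : (0:ℝ) < k := by exact_mod_cast hk1
  refine ⟨?_, hupper⟩
  rw [div_le_iff₀ hB]
  nlinarith [hchain]


end
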